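/- Let n = 3 with 2 ≤ r_1 ≤ r_2 ≤ r_3 and assume d ∈ V_3. For c = (c_1,c_2,c_3) ∈ ℤ^3, the following are equivalent: (a) there exists x ∈ ℝ^d with −1 < x_k ≤ 0 for all k = 1,…,d and c_j − 1 < τ_j(x) ≤ c_j for j = 1,2,3; (b) c ∈ C(r_1,r_2,r_3). (Consequently the conic divisorial ideals of the edge ring k[K_{r_1,r_2,r_3}] are in one-to-one correspondence with the lattice points of C(r_1,r_2,r_3).) -/

import Mathlib

set_option maxHeartbeats 1000000


/-- The linear form `τ_j(x) = Σ_{k ∈ V_1 ∪ V_2} x_k - Σ_{ℓ ∈ V_j} x_ℓ - x_d` (for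
`n = 3`, where `vlast` is the last coordinate `d`). -/
noncomputable def tau3 (d : ℕ) (V1 V2 Vj : Finset (Fin d)) (vlast : Fin d)
    (x : Fin d → ℝ) : ℝ :=
  (∑ k ∈ V1 ∪ V2, x k) - (∑ k ∈ Vj, x k) - x vlast

/-- Membership of `(z_1,z_2,z_3) ∈ ℤ^3` in the polytope `C(r_1,r_2,r_3)`. -/
def inC3 (r1 r2 r3 : ℕ) (z1 z2 z3 : ℤ) : Prop :=
  -(r2 : ℤ) ≤ z1 - z2 ∧ z1 - z2 ≤ (r1 : ℤ) ∧
  -(r3 : ℤ) ≤ z1 - z3 ∧ z1 - z3 ≤ (r1 : ℤ) ∧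
  -(r3 : ℤ) ≤ z2 - z3 ∧ z2 - z3 ≤ (r2 : ℤ) ∧
  -(r2 : ℤ) + 1 ≤ z1 ∧ z1 ≤ 1 ∧
  -(r1 : ℤ) + 1 ≤ z2 ∧ z2 ≤ 1 ∧
  -(r3 : ℤ) + 1 ≤ z1 + z2 - z3 ∧ z1 + z2 - z3 ≤ 1

private lemma int_le_of_real_lt (a b : ℤ) (h : (a : ℝ) < (b : ℝ) + 1) : a ≤ b := by
  have : a < b + 1 := by exact_mod_cast h
  omega

private lemma sum_box {d : ℕ} (V : Finset (Fin d)) (x : Fin d → ℝ)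
    (hx : ∀ k, -1 < x k ∧ x k ≤ 0) (hne : V.Nonempty) :
    -(V.card : ℝ) < ∑ k ∈ V, x k ∧ ∑ k ∈ V, x k ≤ 0 := by
  constructor
  · have h := Finset.sum_lt_sum_of_nonempty hne
      (f := fun _ => (-1 : ℝ)) (fun k _ => (hx k).1)
    rw [Finset.sum_const, nsmul_eq_mul, mul_neg_one] at h
    exact h
  · exact Finset.sum_nonpos fun k _ => (hx k).2

/-- For `n = 3`, `2 ≤ r_1 ≤ r_2 ≤ r_3` and `c ∈ ℤ^3` the following are equivalent:
(a) there is `x ∈ (-1,0]^d` with `c_j - 1 < τ_j(x) ≤ c_j` for `j = 1,2,3`;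
(b) `c ∈ C(r_1,r_2,r_3)`.  (These classes index the conic divisorial ideals of
`k[K_{r_1,r_2,r_3}]`.) -/
theorem stmt_12 (r1 r2 r3 : ℕ) (h1 : 2 ≤ r1) (h12 : r1 ≤ r2) (h23 : r2 ≤ r3)
    (d : ℕ) (hd : d = r1 + r2 + r3)
    (V1 V2 V3 : Finset (Fin d))
    (hc1 : V1.card = r1) (hc2 : V2.card = r2) (hc3 : V3.card = r3)
    (hd12 : Disjoint V1 V2) (hd13 : Disjoint V1 V3) (hd23 : Disjoint V2 V3)
    (hcover : V1 ∪ V2 ∪ V3 = Finset.univ)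
    (vlast : Fin d) (hvlast : (vlast : ℕ) = d - 1) (hlast : vlast ∈ V3)
    (c1 c2 c3 : ℤ) :
    (∃ x : Fin d → ℝ, (∀ k, -1 < x k ∧ x k ≤ 0) ∧
      ((c1 : ℝ) - 1 < tau3 d V1 V2 V1 vlast x ∧ tau3 d V1 V2 V1 vlast x ≤ (c1 : ℝ)) ∧
      ((c2 : ℝ) - 1 < tau3 d V1 V2 V2 vlast x ∧ tau3 d V1 V2 V2 vlast x ≤ (c2 : ℝ)) ∧
      ((c3 : ℝ) - 1 < tau3 d V1 V2 V3 vlast x ∧ tau3 d V1 V2 V3 vlast x ≤ (c3 : ℝ)))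
    ↔ inC3 r1 r2 r3 c1 c2 c3 := by
  have hr1R : (2 : ℝ) ≤ (r1 : ℝ) := by exact_mod_cast h1
  have hr12R : (r1 : ℝ) ≤ (r2 : ℝ) := by exact_mod_cast h12
  have hr23R : (r2 : ℝ) ≤ (r3 : ℝ) := by exact_mod_cast h23
  have hr1pos : (0 : ℝ) < (r1 : ℝ) := by linarith
  have hr2pos : (0 : ℝ) < (r2 : ℝ) := by linarith
  have hr3m1pos : (0 : ℝ) < (r3 : ℝ) - 1 := by linarith
  constructor
  · rintro ⟨x, hx, ⟨h1a, h1b⟩, ⟨h2a, h2b⟩, ⟨h3a, h3b⟩⟩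
    set S1 := ∑ k ∈ V1, x k with hS1def
    set S2 := ∑ k ∈ V2, x k with hS2def
    set S3 := ∑ k ∈ V3, x k with hS3def
    set u := x vlast with hudef
    have hUnion : ∑ k ∈ V1 ∪ V2, x k = S1 + S2 := Finset.sum_union hd12
    have ht1 : tau3 d V1 V2 V1 vlast x = S2 - u := by
      simp only [tau3, hUnion, ← hS1def, ← hudef]; ring
    have ht2 : tau3 d V1 V2 V2 vlast x = S1 - u := by
      simp only [tau3, hUnion, ← hS2def, ← hudef]; ring
    have ht3 : tau3 d V1 V2 V3 vlast x = S1 + S2 - S3 - u := by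
      simp only [tau3, hUnion, ← hS3def, ← hudef]
    rw [ht1] at h1a h1b
    rw [ht2] at h2a h2b
    rw [ht3] at h3a h3b
    have hV1ne : V1.Nonempty := by rw [← Finset.card_pos, hc1]; omega
    have hV2ne : V2.Nonempty := by rw [← Finset.card_pos, hc2]; omega
    have hV3ne : V3.Nonempty := by rw [← Finset.card_pos, hc3]; omega
    have hB1 := sum_box V1 x hx hV1ne
    have hB2 := sum_box V2 x hx hV2ne
    have hB3 := sum_box V3 x hx hV3ne
    rw [hc1] at hB1; rw [hc2] at hB2; rw [hc3] at hB3
    have hu := hx vlast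
    -- T3 = sum over V3 minus vlast
    have herase : S3 = u + ∑ k ∈ V3.erase vlast, x k :=
      (Finset.add_sum_erase V3 x hlast).symm
    have heraseNe : (V3.erase vlast).Nonempty := by
      rw [← Finset.card_pos, Finset.card_erase_of_mem hlast, hc3]; omega
    have hBT := sum_box (V3.erase vlast) x hx heraseNe
    rw [Finset.card_erase_of_mem hlast, hc3] at hBT
    have hcastT : ((r3 - 1 : ℕ) : ℝ) = (r3 : ℝ) - 1 := by
      rw [Nat.cast_sub (by omega)]; norm_num
    rw [hcastT] at hBT
    set T3 := ∑ k ∈ V3.erase vlast, x k with hT3def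
    obtain ⟨hTgt, hTle⟩ := hBT
    -- now derive the 12 integer inequalities
    have A1 : c2 - c1 ≤ (r2 : ℤ) := by
      apply int_le_of_real_lt; push_cast; linarith [hB1.2, hB2.1]
    have A2 : c1 - c2 ≤ (r1 : ℤ) := by
      apply int_le_of_real_lt; push_cast; linarith [hB1.1, hB2.2]
    have A3 : c3 - c1 ≤ (r3 : ℤ) := by
      apply int_le_of_real_lt; push_cast; linarith [hB1.2, hB3.1]
    have A4 : c1 - c3 ≤ (r1 : ℤ) := by
      apply int_le_of_real_lt; push_cast; linarith [hB1.1, hB3.2]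
    have A5 : c3 - c2 ≤ (r3 : ℤ) := by
      apply int_le_of_real_lt; push_cast; linarith [hB2.2, hB3.1]
    have A6 : c2 - c3 ≤ (r2 : ℤ) := by
      apply int_le_of_real_lt; push_cast; linarith [hB2.1, hB3.2]
    have A7 : -c1 ≤ (r2 : ℤ) - 1 := by
      apply int_le_of_real_lt; push_cast; linarith [hB2.1, hu.2]
    have A8 : c1 ≤ 1 := by
      apply int_le_of_real_lt; push_cast; linarith [hB2.2, hu.1]
    have A9 : -c2 ≤ (r1 : ℤ) - 1 := by
      apply int_le_of_real_lt; push_cast; linarith [hB1.1, hu.2]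
    have A10 : c2 ≤ 1 := by
      apply int_le_of_real_lt; push_cast; linarith [hB1.2, hu.1]
    have A11 : c3 - c1 - c2 ≤ (r3 : ℤ) - 1 := by
      apply int_le_of_real_lt; push_cast
      -- c3 - c1 - c2 < τ3 - τ1 - τ2 + 1 = -T3 + 1 < r3
      have : S1 + S2 - S3 - u = -T3 + (S1 - u) + (S2 - u) := by
        rw [herase]; ring
      linarith [hTgt]
    have A12 : c1 + c2 - c3 ≤ 1 := by
      apply int_le_of_real_lt; push_cast
      have : S1 + S2 - S3 - u = -T3 + (S1 - u) + (S2 - u) := by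
        rw [herase]; ring
      linarith [hTle]
    refine ⟨by omega, by omega, by omega, by omega, by omega, by omega,
      by omega, by omega, by omega, by omega, by omega, by omega⟩
  · rintro ⟨g1, g2, g3, g4, g5, g6, g7, g8, g9, g10, g11, g12⟩
    -- real casts of the polytope inequalities
    have G1 : -(r2 : ℝ) ≤ (c1 : ℝ) - c2 := by exact_mod_cast g1
    have G2 : (c1 : ℝ) - c2 ≤ (r1 : ℝ) := by exact_mod_cast g2
    have G7 : -(r2 : ℝ) + 1 ≤ (c1 : ℝ) := by exact_mod_cast g7
    have G8 : (c1 : ℝ) ≤ 1 := by exact_mod_cast g8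
    have G9 : -(r1 : ℝ) + 1 ≤ (c2 : ℝ) := by exact_mod_cast g9
    have G10 : (c2 : ℝ) ≤ 1 := by exact_mod_cast g10
    have G11 : -(r3 : ℝ) + 1 ≤ (c1 : ℝ) + c2 - c3 := by exact_mod_cast g11
    have G12 : (c1 : ℝ) + c2 - c3 ≤ 1 := by exact_mod_cast g12
    set a3 : ℝ := (c1 : ℝ) + c2 - c3 with ha3
    set e0 : ℝ := max (1/4) (a3/2 + 1/8) with he0
    set t : ℝ := if c2 ≤ c1 then (1/16 : ℝ) else -(1/16 : ℝ) with htdef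
    have ht_abs : t = 1/16 ∨ t = -(1/16) := by
      by_cases h : c2 ≤ c1 <;> simp [htdef, h]
    have ht_lo : -(1/16 : ℝ) ≤ t := by rcases ht_abs with h | h <;> rw [h] <;> norm_num
    have ht_hi : t ≤ (1/16 : ℝ) := by rcases ht_abs with h | h <;> rw [h] <;> norm_num
    have he0_lo : (1/4 : ℝ) ≤ e0 := le_max_left _ _
    have he0_a3 : a3/2 + 1/8 ≤ e0 := le_max_right _ _
    have he0_hi : e0 ≤ 5/8 := by
      apply max_le (by norm_num); linarith
    set A : ℝ := (c1 : ℝ) - (e0 + t) with hA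
    set B : ℝ := (c2 : ℝ) - (e0 - t) with hB
    -- windows
    have hA_lo : (c1 : ℝ) - 1 < A := by rw [hA]; linarith
    have hA_hi : A < (c1 : ℝ) := by rw [hA]; linarith
    have hB_lo : (c2 : ℝ) - 1 < B := by rw [hB]; linarith
    have hB_hi : B < (c2 : ℝ) := by rw [hB]; linarith
    have hA_lt1 : A < 1 := by linarith
    have hB_lt1 : B < 1 := by linarith
    have hA_gt : -(r2 : ℝ) < A := by linarith
    have hB_gt : -(r1 : ℝ) < B := by linarith
    -- difference bounds
    have hAB_lt : A - B < (r1 : ℝ) := by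
      rcases le_or_gt c2 c1 with h | h
      · have : t = 1/16 := by simp [htdef, h]
        rw [hA, hB, this]; linarith
      · have hZ : (c1 : ℝ) - c2 ≤ -1 := by
          have : c1 - c2 ≤ -1 := by omega
          exact_mod_cast this
        rw [hA, hB]; linarith
    have hBA_lt : B - A < (r2 : ℝ) := by
      rcases le_or_gt c2 c1 with h | h
      · have hZ : (c2 : ℝ) - c1 ≤ 0 := by
          have : c2 - c1 ≤ 0 := by omega
          exact_mod_cast this
        rw [hA, hB]; linarith
      · have ht' : t = -(1/16) := by simp [htdef, not_le.mpr h]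
        rw [hA, hB, ht']; linarith
    -- P and T3
    set P : ℝ := A + B - c3 with hP
    have hP_eq : P = a3 - 2*e0 := by rw [hP, hA, hB, ha3]; ring
    have hP_le : P ≤ 0 := by rw [hP_eq]; linarith
    have hP_gt : -(r3 : ℝ) < P := by
      rw [hP_eq]
      -- case on a3 ≤ 0 or a3 = 1 (integer valued)
      rcases le_or_gt (c1 + c2 - c3) 0 with h | h
      · have hZ : a3 ≤ 0 := by rw [ha3]; exact_mod_cast h
        have : e0 = 1/4 := by
          rw [he0]; apply max_eq_left; linarith
        rw [this]; linarith
      · have hZ : a3 = 1 := by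
          have : c1 + c2 - c3 = 1 := by omega
          rw [ha3]; exact_mod_cast this
        rw [hZ] at he0_a3 ⊢; linarith
    set T3 : ℝ := max P ((P + 2 - (r3 : ℝ))/2) with hT3
    have hT3_geP : P ≤ T3 := le_max_left _ _
    have hT3_ltP1 : T3 < P + 1 := by
      apply max_lt (by linarith); linarith
    have hT3_le : T3 ≤ 0 := by
      apply max_le hP_le; linarith
    have hT3_gt : 1 - (r3 : ℝ) < T3 := by
      calc 1 - (r3 : ℝ) < (P + 2 - (r3 : ℝ))/2 := by linarith
      _ ≤ T3 := le_max_right _ _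
    -- M and u
    set M : ℝ := max 0 (max A B) with hM
    have hM_nonneg : (0 : ℝ) ≤ M := le_max_left _ _
    have hM_geA : A ≤ M := le_trans (le_max_left _ _) (le_max_right _ _)
    have hM_geB : B ≤ M := le_trans (le_max_right _ _) (le_max_right _ _)
    have hM_lt1 : M < 1 := by
      apply max_lt (by norm_num) (max_lt hA_lt1 hB_lt1)
    set u : ℝ := -M with hu
    have hu_le : u ≤ 0 := by rw [hu]; linarith
    have hu_gt : -1 < u := by rw [hu]; linarith
    -- block sums targets
    have hS1_le : B + u ≤ 0 := by rw [hu]; linarith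
    have hS1_gt : -(r1 : ℝ) < B + u := by
      rw [hu]
      have : M < (r1 : ℝ) + B := by
        apply max_lt (by linarith) (max_lt (by linarith) (by linarith))
      linarith
    have hS2_le : A + u ≤ 0 := by rw [hu]; linarith
    have hS2_gt : -(r2 : ℝ) < A + u := by
      rw [hu]
      have : M < (r2 : ℝ) + A := by
        apply max_lt (by linarith) (max_lt (by linarith) (by linarith))
      linarith
    -- membership helpers
    have hv1 : vlast ∉ V1 := Finset.disjoint_right.mp hd13 hlast
    have hv2 : vlast ∉ V2 := Finset.disjoint_right.mp hd23 hlast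
    -- the witness
    set x : Fin d → ℝ := fun k => if k ∈ V1 then (B + u)/(r1 : ℝ)
      else if k ∈ V2 then (A + u)/(r2 : ℝ)
      else if k = vlast then u
      else T3/((r3 : ℝ) - 1) with hxdef
    have hx1 : ∀ k ∈ V1, x k = (B + u)/(r1 : ℝ) := by
      intro k hk; rw [hxdef]; simp only [hk, if_true]
    have hx2 : ∀ k ∈ V2, x k = (A + u)/(r2 : ℝ) := by
      intro k hk
      have hk1 : k ∉ V1 := Finset.disjoint_right.mp hd12 hk
      rw [hxdef]; simp only [hk, hk1, if_true, if_false]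
    have hxv : x vlast = u := by
      rw [hxdef]; simp only [hv1, hv2, if_false, if_true]
    have hx3 : ∀ k ∈ V3.erase vlast, x k = T3/((r3 : ℝ) - 1) := by
      intro k hk
      have hk3 : k ∈ V3 := Finset.mem_of_mem_erase hk
      have hkv : k ≠ vlast := Finset.ne_of_mem_erase hk
      have hk1 : k ∉ V1 := Finset.disjoint_right.mp hd13 hk3
      have hk2 : k ∉ V2 := Finset.disjoint_right.mp hd23 hk3
      rw [hxdef]; simp only [hk1, hk2, hkv, if_false]
    have hsum1 : ∑ k ∈ V1, x k = B + u := by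
      rw [Finset.sum_congr rfl hx1, Finset.sum_const, hc1, nsmul_eq_mul]
      field_simp
    have hsum2 : ∑ k ∈ V2, x k = A + u := by
      rw [Finset.sum_congr rfl hx2, Finset.sum_const, hc2, nsmul_eq_mul]
      field_simp
    have hsum3 : ∑ k ∈ V3, x k = u + T3 := by
      rw [← Finset.add_sum_erase V3 _ hlast, hxv]
      congr 1
      rw [Finset.sum_congr rfl hx3, Finset.sum_const,
        Finset.card_erase_of_mem hlast, hc3, nsmul_eq_mul]
      rw [Nat.cast_sub (by omega)]
      push_cast
      field_simp
    have hUnion : ∑ k ∈ V1 ∪ V2, x k = (B + u) + (A + u) := by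
      rw [Finset.sum_union hd12, hsum1, hsum2]
    refine ⟨x, ?_, ?_, ?_, ?_⟩
    · intro k
      by_cases hk1 : k ∈ V1
      · rw [hx1 k hk1]
        constructor
        · rw [lt_div_iff₀ hr1pos]; linarith
        · rw [div_le_iff₀ hr1pos]; linarith
      · by_cases hk2 : k ∈ V2
        · rw [hx2 k hk2]
          constructor
          · rw [lt_div_iff₀ hr2pos]; linarith
          · rw [div_le_iff₀ hr2pos]; linarith
        · by_cases hkv : k = vlast
          · rw [hkv, hxv]; exact ⟨hu_gt, hu_le⟩
          · have hk3 : k ∈ V3 := by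
              have : k ∈ V1 ∪ V2 ∪ V3 := by rw [hcover]; exact Finset.mem_univ k
              simp only [Finset.mem_union] at this
              tauto
            rw [hx3 k (Finset.mem_erase.mpr ⟨hkv, hk3⟩)]
            constructor
            · rw [lt_div_iff₀ hr3m1pos]; linarith
            · rw [div_le_iff₀ hr3m1pos]; linarith
    · rw [tau3, hUnion, hsum1, hxv]
      constructor <;> linarith
    · rw [tau3, hUnion, hsum2, hxv]
      constructor <;> linarith
    · rw [tau3, hUnion, hsum3, hxv]
      constructor <;> linarith
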